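/- Let S be a string. If w₁ = a₁u₁b and w₂ = a₂u₂b are two distinct minimal rare words for S that both occur in S (occ ≥ 1), end with the same character b, and a₁u₁ and a₂u₂ are right-extensions to the same maximal position in the sense that a₁u₁ is a suffix of a₂u₂, then occ_S(w₁) ≠ occ_S(w₂) or w₂ is not an MRW — i.e., it is impossible that w₁ is a proper suffix of w₂ with occ_S(w₁) = occ_S(w₂) and both w₁, w₂ MRWs occurring in S. -/

import Mathlib

/-- Number of occurrences of `w` as a substring of `S` (for `w = ε` this is `|S| + 1`). -/
def occ {α : Type*} [DecidableEq α] (S w : List α) : ℕ :=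
  (List.range (S.length + 1)).countP
    (fun i => decide (i + w.length ≤ S.length ∧ (S.drop i).take w.length = w))

/-- `aub` is a minimal rare word for `S`. -/
def IsMRW {α : Type*} [DecidableEq α] (S : List α) (a : α) (u : List α) (b : α) : Prop :=
  occ S (a :: (u ++ [b])) < occ S (a :: u) ∧ occ S (a :: (u ++ [b])) < occ S (u ++ [b])

lemma occ_eq_card {α : Type*} [DecidableEq α] (S w : List α) :
    occ S w = ((Finset.range (S.length+1)).filter
      (fun i => i + w.length ≤ S.length ∧ (S.drop i).take w.length = w)).card := by
  simp [occ, Finset.filter, Finset.range, Multiset.filter, Multiset.range,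
    List.countP_eq_length_filter]

lemma occ_le_of_suffix {α : Type*} [DecidableEq α] (S x y : List α) (h : x <:+ y) :
    occ S y ≤ occ S x := by
  obtain ⟨t, rfl⟩ := h
  rw [occ_eq_card, occ_eq_card]
  apply Finset.card_le_card_of_injOn (fun i => i + t.length)
  · intro i hi
    simp only [Finset.mem_coe, Finset.mem_filter, Finset.mem_range] at hi ⊢
    obtain ⟨hr, hle, htake⟩ := hi
    rw [List.length_append] at hle
    refine ⟨by omega, by omega, ?_⟩
    have h2 : ((S.drop i).take (t.length + x.length)).drop t.length = x := by
      rw [← List.length_append, htake, List.drop_left]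
    rw [List.drop_take] at h2
    rw [← List.drop_drop]
    simpa using h2
  · intro i _ j _ hij
    simpa using hij

theorem no_proper_suffix_mrw_same_occ {α : Type*} [DecidableEq α]
    (S : List α) (a₁ a₂ b : α) (u₁ u₂ : List α)
    (h₁ : IsMRW S a₁ u₁ b) (h₂ : IsMRW S a₂ u₂ b)
    (hocc₁ : 1 ≤ occ S (a₁ :: (u₁ ++ [b])))
    (heq : occ S (a₁ :: (u₁ ++ [b])) = occ S (a₂ :: (u₂ ++ [b])))
    (hsuf : (a₁ :: (u₁ ++ [b])) <:+ (a₂ :: (u₂ ++ [b])))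
    (hne : (a₁ :: (u₁ ++ [b])) ≠ (a₂ :: (u₂ ++ [b]))) :
    False := by
  -- lengths
  have hlen : (a₁ :: (u₁ ++ [b])).length < (a₂ :: (u₂ ++ [b])).length := by
    rcases lt_or_eq_of_le hsuf.length_le with h | h
    · exact h
    · exact absurd (List.IsSuffix.eq_of_length hsuf h) hne
  -- u₂ ++ [b] is a suffix of a₂ :: (u₂ ++ [b])
  have hsuf2 : (u₂ ++ [b]) <:+ (a₂ :: (u₂ ++ [b])) := ⟨[a₂], rfl⟩
  -- w₁ is a suffix of u₂ ++ [b]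
  have hsuf3 : (a₁ :: (u₁ ++ [b])) <:+ (u₂ ++ [b]) := by
    rw [← List.reverse_prefix] at hsuf hsuf2 ⊢
    refine List.prefix_of_prefix_length_le hsuf hsuf2 ?_
    simp only [List.length_reverse] at *
    simp only [List.length_cons, List.length_append, List.length_singleton] at hlen ⊢
    omega
  have hle : occ S (u₂ ++ [b]) ≤ occ S (a₁ :: (u₁ ++ [b])) :=
    occ_le_of_suffix S _ _ hsuf3
  have := h₂.2
  omega
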